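/- Let l : X → ℝ and let H : [0,T] × X × ℝⁿ → ℝ be a Hamiltonian. Suppose f : X → X is a differentiable bijection such that l(x) = l(f(x)) for all x, and such that H(t, x, ∇ₓV(t,x)) = H(t, f(x), ∇_f V(t,f(x))) for all t ∈ [0,T], x ∈ X, where V satisfies ∂V/∂t(t,x) + min{H(t,x,∇ₓV(t,x)), 0} = 0 with V(T,x) = l(x). Then V(t,x) = V(t,f(x)) for all t ∈ [0,T] and x ∈ X. -/

import Mathlib

/-- Symmetry of the HJI value function: if a differentiable bijection `f` of the
state space preserves the boundary function `l` and the Hamiltonian along `V`, and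
`V` solves the HJI PDE `∂V/∂t + min{H(t,x,∇ₓV),0} = 0` with terminal condition
`V(T,·) = l`, then `V(t,x) = V(t, f(x))` for all `t ∈ [0,T]` and `x ∈ X`. -/
theorem stmt_2 {n : ℕ} (T : ℝ) (hT : 0 < T)
    (X : Set (EuclideanSpace ℝ (Fin n))) (hX : IsOpen X)
    (f : EuclideanSpace ℝ (Fin n) → EuclideanSpace ℝ (Fin n))
    (hfbij : Set.BijOn f X X) (hfdiff : Differentiable ℝ f)
    (l : EuclideanSpace ℝ (Fin n) → ℝ)
    (hl : ∀ x ∈ X, l x = l (f x))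
    (H : ℝ → EuclideanSpace ℝ (Fin n) → EuclideanSpace ℝ (Fin n) → ℝ)
    (V : ℝ → EuclideanSpace ℝ (Fin n) → ℝ)
    (hVx : ∀ t ∈ Set.Icc (0:ℝ) T, ∀ x ∈ X, DifferentiableAt ℝ (fun y => V t y) x)
    (hVt : ∀ x ∈ X, DifferentiableOn ℝ (fun t => V t x) (Set.Icc 0 T))
    (hHsym : ∀ t ∈ Set.Icc (0:ℝ) T, ∀ x ∈ X,
      H t x (gradient (fun y => V t y) x) = H t (f x) (gradient (fun y => V t y) (f x)))
    (hPDE : ∀ t ∈ Set.Icc (0:ℝ) T, ∀ x ∈ X,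
      derivWithin (fun s => V s x) (Set.Icc 0 T) t
        + min (H t x (gradient (fun y => V t y) x)) 0 = 0)
    (hterm : ∀ x ∈ X, V T x = l x) :
    ∀ t ∈ Set.Icc (0:ℝ) T, ∀ x ∈ X, V t x = V t (f x) := by
  intro t ht x hx
  have hfx : f x ∈ X := hfbij.mapsTo hx
  set g : ℝ → ℝ := fun s => V s x - V s (f x) with hg
  have hgdiff : DifferentiableOn ℝ g (Set.Icc 0 T) :=
    (hVt x hx).sub (hVt (f x) hfx)
  have hud : UniqueDiffOn ℝ (Set.Icc (0:ℝ) T) := uniqueDiffOn_Icc hT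
  have hderiv : ∀ s ∈ Set.Ico (0:ℝ) T, derivWithin g (Set.Icc 0 T) s = 0 := by
    intro s hs
    have hs' : s ∈ Set.Icc (0:ℝ) T := Set.Ico_subset_Icc_self hs
    have h1 := hPDE s hs' x hx
    have h2 := hPDE s hs' (f x) hfx
    have hsym := hHsym s hs' x hx
    have hdsub : derivWithin g (Set.Icc 0 T) s =
        derivWithin (fun u => V u x) (Set.Icc 0 T) s
          - derivWithin (fun u => V u (f x)) (Set.Icc 0 T) s :=
      derivWithin_sub (hVt x hx s hs')
        (hVt (f x) hfx s hs')
    rw [hdsub]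
    rw [hsym] at h1
    linarith
  have hconst := constant_of_derivWithin_zero hgdiff hderiv
  have hT' : g T = g 0 := hconst T (Set.right_mem_Icc.mpr hT.le)
  have hT0 : g T = 0 := by
    simp only [hg]
    rw [hterm x hx, hterm (f x) hfx, hl x hx, sub_self]
  have : g t = 0 := by rw [hconst t ht, ← hT', hT0]
  simpa [hg, sub_eq_zero] using this
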